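/- If two simple qq-characters χ₁, χ₂ are mutually generic (no Y-variable occurring in any monomial of χ₁ occurs in any monomial of χ₂), then for all m∈χ₁, n∈χ₂ the relative pairing vanishes: (m,n)_{m₀,n₀} = 0, and consequently the combinatorial fusion coincides with the ordinary product, χ₁*χ₂ = χ₁χ₂. -/
import Mathlib


/-! Statement 6: if two simple qq-characters are mutually generic then all relative pairings
vanish, and consequently the combinatorial fusion coincides with the ordinary product.

Setup as in the definition of combinatorial fusion.  The two characters are
`χ₁ = Σ_{a ∈ A₁} m₀ Π_j A_{i_j,σ_j}^{a_j}` and `χ₂ = Σ_{b ∈ A₂} n₀ Π_j A_{i_j,σ_j}^{b_j}`;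
the hypotheses `hkey₁`, `hkey₂` are the key property of affine-root expressions: if `A_{i_j,σ_j}`
appears in a monomial of the character then some monomial of the character contains
`Y_{i_j,σ_j q}` and some contains `Y_{i_j,σ_j q^{-1}}`. -/

abbrev YMon (I Γ : Type*) : Type _ := (I × Γ) →₀ ℤ

noncomputable def lcon {I Γ : Type*} [DecidableEq I] [AddCommGroup Γ]
    (q : Γ) (i : I) (σ₀ : Γ) (m : YMon I Γ) : Γ →₀ ℤ :=
  m.sum fun p c =>
    c • (if p.1 = i then Finsupp.single (q + p.2 - σ₀) 1 - Finsupp.single (-q + p.2 - σ₀) 1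
         else 0)

noncomputable def rcon {I Γ : Type*} [DecidableEq I] [AddCommGroup Γ]
    (q : Γ) (i : I) (σ₀ : Γ) (m : YMon I Γ) : Γ →₀ ℤ :=
  m.sum fun p c =>
    c • (if p.1 = i then -(Finsupp.single (q + σ₀ - p.2) 1 - Finsupp.single (-q + σ₀ - p.2) 1)
         else 0)

noncomputable def affRoot {I Γ : Type*} [Fintype I] [AddCommGroup Γ]
    (σm : I → I → Γ) (j : I) (τ : Γ) : YMon I Γ :=
  ∑ i : I, (Finsupp.single (i, σm i j + τ) (1 : ℤ) - Finsupp.single (i, -σm i j + τ) 1)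

noncomputable def monoOf {I Γ J : Type*} [Fintype I] [Fintype J] [AddCommGroup Γ]
    (σm : I → I → Γ) (idx : J → I) (sh : J → Γ) (x0 : YMon I Γ) (c : J → ℤ) : YMon I Γ :=
  x0 + ∑ j : J, c j • affRoot σm (idx j) (sh j)

/-- The relative pairing `(m,n)_{m₀,n₀}`. -/
noncomputable def pairing {I Γ J : Type*} [Fintype I] [DecidableEq I] [Fintype J]
    [AddCommGroup Γ]
    (q : Γ) (σm : I → I → Γ) (idx : J → I) (sh : J → Γ) (m0 n0 : YMon I Γ)
    (a b : J → ℤ) : ℤ :=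
  (∑ j : J,
      (a j • lcon q (idx j) (sh j) n0
        + b j • rcon q (idx j) (sh j) (monoOf σm idx sh m0 a))) 0


section Aux
variable {I Γ : Type*} [DecidableEq I] [AddCommGroup Γ]

lemma lcon_apply_zero (q : Γ) (i : I) (σ₀ : Γ) (m : YMon I Γ) :
    lcon q i σ₀ m 0 = m (i, -q + σ₀) - m (i, q + σ₀) := by
  classical
  rw [lcon, Finsupp.sum_apply, Finsupp.sum]
  have key : ∀ p ∈ m.support,
      (m p • (if p.1 = i then Finsupp.single (q + p.2 - σ₀) 1
          - Finsupp.single (-q + p.2 - σ₀) (1:ℤ) else (0 : Γ →₀ ℤ))) 0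
      = (if p = (i, -q + σ₀) then m p else 0) - (if p = (i, q + σ₀) then m p else 0) := by
    rintro ⟨pi, pg⟩ -
    by_cases h : pi = i
    · subst h
      have h1 : (q + pg - σ₀ = 0) ↔ (pg = -q + σ₀) := by
        rw [sub_eq_zero]
        constructor
        · intro h; rw [← h]; abel
        · intro h; rw [h]; abel
      have h2 : (-q + pg - σ₀ = 0) ↔ (pg = q + σ₀) := by
        rw [sub_eq_zero]
        constructor
        · intro h; rw [← h]; abel
        · intro h; rw [h]; abel
      simp only [if_pos rfl, eq_self_iff_true, if_true, Finsupp.smul_apply, Finsupp.sub_apply, Finsupp.single_apply,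
        Prod.mk.injEq, true_and, h1, h2]
      simp only [smul_eq_mul, mul_sub, mul_ite, mul_one, mul_zero]
    · have h1 : ¬ ((pi, pg) = (i, -q + σ₀)) := by simp [h]
      have h2 : ¬ ((pi, pg) = (i, q + σ₀)) := by simp [h]
      simp [h, h1, h2]
  rw [Finset.sum_congr rfl key, Finset.sum_sub_distrib]
  congr 1
  · rw [Finset.sum_ite_eq' m.support]
    by_cases h : (i, -q + σ₀) ∈ m.support
    · simp [h]
    · simp [h, Finsupp.notMem_support_iff.mp h]
  · rw [Finset.sum_ite_eq' m.support]
    by_cases h : (i, q + σ₀) ∈ m.support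
    · simp [h]
    · simp [h, Finsupp.notMem_support_iff.mp h]

lemma rcon_apply_zero (q : Γ) (i : I) (σ₀ : Γ) (m : YMon I Γ) :
    rcon q i σ₀ m 0 = m (i, -q + σ₀) - m (i, q + σ₀) := by
  classical
  rw [rcon, Finsupp.sum_apply, Finsupp.sum]
  have key : ∀ p ∈ m.support,
      (m p • (if p.1 = i then -(Finsupp.single (q + σ₀ - p.2) 1
          - Finsupp.single (-q + σ₀ - p.2) (1:ℤ)) else (0 : Γ →₀ ℤ))) 0
      = (if p = (i, -q + σ₀) then m p else 0) - (if p = (i, q + σ₀) then m p else 0) := by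
    rintro ⟨pi, pg⟩ -
    by_cases h : pi = i
    · subst h
      have h1 : (q + σ₀ - pg = 0) ↔ (pg = q + σ₀) := by
        rw [sub_eq_zero, eq_comm]
      have h2 : (-q + σ₀ - pg = 0) ↔ (pg = -q + σ₀) := by
        rw [sub_eq_zero, eq_comm]
      simp only [if_pos rfl, eq_self_iff_true, if_true, neg_sub, Finsupp.smul_apply, Finsupp.sub_apply,
        Finsupp.single_apply, Prod.mk.injEq, true_and, h1, h2]
      simp only [smul_eq_mul, mul_sub, mul_ite, mul_one, mul_zero]
    · have h1 : ¬ ((pi, pg) = (i, -q + σ₀)) := by simp [h]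
      have h2 : ¬ ((pi, pg) = (i, q + σ₀)) := by simp [h]
      simp [h, h1, h2]
  rw [Finset.sum_congr rfl key, Finset.sum_sub_distrib]
  congr 1
  · rw [Finset.sum_ite_eq' m.support]
    by_cases h : (i, -q + σ₀) ∈ m.support
    · simp [h]
    · simp [h, Finsupp.notMem_support_iff.mp h]
  · rw [Finset.sum_ite_eq' m.support]
    by_cases h : (i, q + σ₀) ∈ m.support
    · simp [h]
    · simp [h, Finsupp.notMem_support_iff.mp h]

end Aux

open Classical in
theorem statement6 {I Γ J : Type*} [Fintype I] [DecidableEq I] [Fintype J] [AddCommGroup Γ]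
    (q : Γ) (σm : I → I → Γ)
    (hsym : ∀ i j, σm i j = σm j i) (hdiag : ∀ i, σm i i = q)
    (idx : J → I) (sh : J → Γ) (m0 n0 : YMon I Γ)
    (A₁ A₂ : Finset (J → ℤ)) (h01 : 0 ∈ A₁) (h02 : 0 ∈ A₂)
    -- mutual genericity: no Y-variable of a monomial of χ₁ occurs in a monomial of χ₂
    (hgen : ∀ a ∈ A₁, ∀ b ∈ A₂,
      Disjoint (monoOf σm idx sh m0 a).support (monoOf σm idx sh n0 b).support)
    -- if A_{i_j,σ_j} occurs in χ₁ then χ₁ contains Y_{i_j, σ_j q^{±1}}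
    (hkey₁ : ∀ j : J, (∃ a ∈ A₁, a j ≠ 0) →
      (∃ a ∈ A₁, (idx j, q + sh j) ∈ (monoOf σm idx sh m0 a).support) ∧
      (∃ a ∈ A₁, (idx j, -q + sh j) ∈ (monoOf σm idx sh m0 a).support))
    (hkey₂ : ∀ j : J, (∃ b ∈ A₂, b j ≠ 0) →
      (∃ b ∈ A₂, (idx j, q + sh j) ∈ (monoOf σm idx sh n0 b).support) ∧
      (∃ b ∈ A₂, (idx j, -q + sh j) ∈ (monoOf σm idx sh n0 b).support)) :
    (∀ a ∈ A₁, ∀ b ∈ A₂, pairing q σm idx sh m0 n0 a b = 0) ∧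
    (∑ p ∈ (A₁ ×ˢ A₂).filter
        (fun p => ∀ p' ∈ A₁ ×ˢ A₂,
          pairing q σm idx sh m0 n0 p'.1 p'.2 ≤ pairing q σm idx sh m0 n0 p.1 p.2),
        Finsupp.single (monoOf σm idx sh m0 p.1 + monoOf σm idx sh n0 p.2) (1 : ℤ)
      = ∑ p ∈ A₁ ×ˢ A₂,
          Finsupp.single (monoOf σm idx sh m0 p.1 + monoOf σm idx sh n0 p.2) (1 : ℤ)) := by
  classical
  have hpair : ∀ a ∈ A₁, ∀ b ∈ A₂, pairing q σm idx sh m0 n0 a b = 0 := by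
    intro a ha b hb
    have hn0 : monoOf σm idx sh n0 0 = n0 := by simp [monoOf]
    rw [pairing, Finsupp.finset_sum_apply]
    apply Finset.sum_eq_zero
    intro j _
    rw [Finsupp.add_apply, Finsupp.smul_apply, Finsupp.smul_apply,
      lcon_apply_zero, rcon_apply_zero]
    have t1 : a j • (n0 (idx j, -q + sh j) - n0 (idx j, q + sh j)) = 0 := by
      by_cases haj : a j = 0
      · simp [haj]
      · obtain ⟨⟨a', ha', hma'⟩, ⟨a'', ha'', hma''⟩⟩ := hkey₁ j ⟨a, ha, haj⟩
        have d1 := hgen a' ha' 0 h02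
        have d2 := hgen a'' ha'' 0 h02
        rw [hn0] at d1 d2
        have e1 : n0 (idx j, q + sh j) = 0 := by
          by_contra hc
          exact (Finset.disjoint_left.mp d1) hma' (Finsupp.mem_support_iff.mpr hc)
        have e2 : n0 (idx j, -q + sh j) = 0 := by
          by_contra hc
          exact (Finset.disjoint_left.mp d2) hma'' (Finsupp.mem_support_iff.mpr hc)
        simp [e1, e2]
    have t2 : b j • ((monoOf σm idx sh m0 a) (idx j, -q + sh j)
        - (monoOf σm idx sh m0 a) (idx j, q + sh j)) = 0 := by
      by_cases hbj : b j = 0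
      · simp [hbj]
      · obtain ⟨⟨b', hb', hnb'⟩, ⟨b'', hb'', hnb''⟩⟩ := hkey₂ j ⟨b, hb, hbj⟩
        have d1 := hgen a ha b' hb'
        have d2 := hgen a ha b'' hb''
        have e1 : (monoOf σm idx sh m0 a) (idx j, q + sh j) = 0 := by
          by_contra hc
          exact (Finset.disjoint_right.mp d1) hnb' (Finsupp.mem_support_iff.mpr hc)
        have e2 : (monoOf σm idx sh m0 a) (idx j, -q + sh j) = 0 := by
          by_contra hc
          exact (Finset.disjoint_right.mp d2) hnb'' (Finsupp.mem_support_iff.mpr hc)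
        simp [e1, e2]
    rw [t1, t2, add_zero]
  refine ⟨hpair, ?_⟩
  have hset : ∀ (inst : DecidablePred fun p : (J → ℤ) × (J → ℤ) =>
        ∀ p' ∈ A₁ ×ˢ A₂, pairing q σm idx sh m0 n0 p'.1 p'.2
          ≤ pairing q σm idx sh m0 n0 p.1 p.2),
      @Finset.filter _ (fun p : (J → ℤ) × (J → ℤ) =>
        ∀ p' ∈ A₁ ×ˢ A₂, pairing q σm idx sh m0 n0 p'.1 p'.2
          ≤ pairing q σm idx sh m0 n0 p.1 p.2) inst (A₁ ×ˢ A₂) = A₁ ×ˢ A₂ := by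
    intro inst
    apply Finset.Subset.antisymm (Finset.filter_subset _ _)
    intro p hp
    rw [Finset.mem_filter]
    refine ⟨hp, fun p' hp' => ?_⟩
    rw [hpair p.1 (Finset.mem_product.mp hp).1 p.2 (Finset.mem_product.mp hp).2,
      hpair p'.1 (Finset.mem_product.mp hp').1 p'.2 (Finset.mem_product.mp hp').2]
  rw [hset _]
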